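/- For every odd integer n ≥ 5 there exists a strongly connected digraph D on n vertices such that every vertex x of D satisfies 2·deg(x) ≥ n + 1 (i.e., all degrees are at least (n+1)/2), and D has exactly one noncritical vertex. (Hence the degree bound (n+2)/2 guaranteeing two noncritical vertices cannot be lowered to (n+1)/2.) -/

import Mathlib

/-- A digraph (given by its adjacency/arc relation `Adj`) is strongly connected if
every vertex can reach every other vertex by a directed path. -/
def IsStronglyConnected {V : Type*} (Adj : V → V → Prop) : Prop :=
  ∀ x y : V, Relation.ReflTransGen Adj x y

/-- The degree of a vertex `x`: the number of vertices `y ≠ x` joined to `x`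
by an arc in at least one direction. -/
noncomputable def degree {V : Type*} (Adj : V → V → Prop) (x : V) : ℕ :=
  {y : V | y ≠ x ∧ (Adj x y ∨ Adj y x)}.ncard

/-- A vertex `v` is noncritical if the digraph obtained by deleting `v`
(induced on the remaining vertices) is strongly connected. -/
def Noncritical {V : Type*} (Adj : V → V → Prop) (v : V) : Prop :=
  IsStronglyConnected (fun a b : {u : V // u ≠ v} => Adj a b)

namespace UNCaux

/-- hub vertices: `0` and the odd vertices.  They have arcs to all targets. -/
def hubP (m : ℕ) : Prop := m = 0 ∨ m % 2 = 1

/-- target vertices: `1` and the nonzero even vertices. -/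
def tgtP (m : ℕ) : Prop := m = 1 ∨ (m % 2 = 0 ∧ m ≠ 0)

/-- The extremal digraph: hubs point to all targets (other than themselves);
a non-hub (nonzero even vertex) points only to its cyclic successor. -/
def myAdj (n : ℕ) (i j : Fin n) : Prop :=
  (hubP i.val ∧ j ≠ i ∧ tgtP j.val) ∨ (¬ hubP i.val ∧ j.val = (i.val + 1) % n)

lemma succ_spec {n m : ℕ} (h : m < n) : (m + 1) % n = if m + 1 = n then 0 else m + 1 := by
  split
  · next heq => rw [heq, Nat.mod_self]
  · next hne => exact Nat.mod_eq_of_lt (by omega)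

lemma closed_rtg {α : Type*} {r : α → α → Prop} {P : α → Prop}
    (hP : ∀ a b, P a → r a b → P b) {x y : α} (h : Relation.ReflTransGen r x y)
    (hx : P x) : P y := by
  induction h with
  | refl => exact hx
  | tail _ hab ih => exact hP _ _ ih hab

lemma card_le_ncard {α : Type*} {s : Set α} {t : Finset α}
    (h : ∀ x ∈ t, x ∈ s) (hs : s.Finite) : t.card ≤ s.ncard := by
  rw [← Set.ncard_coe_finset]
  exact Set.ncard_le_ncard (fun x hx => h x (by simpa using hx)) hs

variable {n : ℕ}

/-- Vertex 1 is noncritical: the digraph minus vertex 1 is strongly connected. -/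
lemma noncrit_v1 (hn : 5 ≤ n) (ho : n % 2 = 1) (v1 : Fin n) (hv1 : v1.val = 1) :
    Noncritical (myAdj n) v1 := by
  intro x y
  by_cases hxy : x = y
  · subst hxy; exact .refl
  -- step 1 : from x reach a hub (≠ v1)
  obtain ⟨h, hh, hxh⟩ : ∃ h : {u : Fin n // u ≠ v1}, hubP h.val.val ∧
      Relation.ReflTransGen (fun a b : {u : Fin n // u ≠ v1} => myAdj n a.val b.val) x h := by
    by_cases hx : hubP x.val.val
    · exact ⟨x, hx, .refl⟩
    · have hx' : x.val.val % 2 = 0 ∧ x.val.val ≠ 0 := by unfold hubP at hx; omega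
      have hlt : (x.val.val + 1) % n < n := Nat.mod_lt _ (by omega)
      have hspec := succ_spec (x.val.isLt)
      refine ⟨⟨⟨(x.val.val + 1) % n, hlt⟩, Fin.ne_of_val_ne ?_⟩, ?_, .single (Or.inr ⟨hx, rfl⟩)⟩
      · show (x.val.val + 1) % n ≠ v1.val
        rw [hspec, hv1]; split <;> omega
      · show hubP ((x.val.val + 1) % n)
        unfold hubP; rw [hspec]; split <;> omega
  -- step 2 : from hub h reach y
  rcases eq_or_ne y h with rfl | hyh
  · exact hxh
  have hyh' : y.val ≠ h.val := fun hc => hyh (Subtype.ext hc)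
  have hy1 : y.val.val ≠ 1 := fun hc => y.prop (Fin.ext (by rw [hc, hv1]))
  by_cases hty : tgtP y.val.val
  · exact hxh.tail (Or.inl ⟨hh, hyh', hty⟩)
  · have hyc : y.val.val = 0 ∨ (y.val.val % 2 = 1 ∧ 3 ≤ y.val.val) := by
      unfold tgtP at hty; omega
    rcases hyc with hy0 | ⟨hodd, h3⟩
    · -- go through q = n-1
      have hqlt : n - 1 < n := by omega
      have hqh : ¬ hubP (n - 1) := by unfold hubP; omega
      have hqne : ((⟨n - 1, hqlt⟩ : Fin n)) ≠ v1 :=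
        Fin.ne_of_val_ne (show n - 1 ≠ v1.val by rw [hv1]; omega)
      have hqh2 : (n - 1) ≠ h.val.val := by intro hc; rw [hc] at hqh; exact hqh hh
      set qq : {u : Fin n // u ≠ v1} := ⟨⟨n - 1, hqlt⟩, hqne⟩ with hqq
      have h1 : myAdj n h.val qq.val :=
        Or.inl ⟨hh, Fin.ne_of_val_ne hqh2, Or.inr ⟨show (n - 1) % 2 = 0 by omega,
          show n - 1 ≠ 0 by omega⟩⟩
      have h2 : myAdj n qq.val y.val := by
        refine Or.inr ⟨hqh, ?_⟩
        show y.val.val = (n - 1 + 1) % n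
        have e : n - 1 + 1 = n := by omega
        rw [e, Nat.mod_self]; exact hy0
      exact (hxh.tail (c := qq) h1).tail h2
    · -- go through p = y - 1
      have hplt : y.val.val - 1 < n := by have := y.val.isLt; omega
      have hph : ¬ hubP (y.val.val - 1) := by unfold hubP; omega
      have hpne : ((⟨y.val.val - 1, hplt⟩ : Fin n)) ≠ v1 :=
        Fin.ne_of_val_ne (show y.val.val - 1 ≠ v1.val by rw [hv1]; omega)
      have hph2 : (y.val.val - 1) ≠ h.val.val := by intro hc; rw [hc] at hph; exact hph hh
      set pp : {u : Fin n // u ≠ v1} := ⟨⟨y.val.val - 1, hplt⟩, hpne⟩ with hpp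
      have h1 : myAdj n h.val pp.val :=
        Or.inl ⟨hh, Fin.ne_of_val_ne hph2, Or.inr ⟨show (y.val.val - 1) % 2 = 0 by omega,
          show y.val.val - 1 ≠ 0 by omega⟩⟩
      have h2 : myAdj n pp.val y.val := by
        refine Or.inr ⟨hph, ?_⟩
        show y.val.val = (y.val.val - 1 + 1) % n
        have e : y.val.val - 1 + 1 = y.val.val := by omega
        rw [e, Nat.mod_eq_of_lt y.val.isLt]
      exact (hxh.tail (c := pp) h1).tail h2

/-- The whole digraph is strongly connected. -/
lemma strong_full (hn : 5 ≤ n) (ho : n % 2 = 1) : IsStronglyConnected (myAdj n) := by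
  have hv1lt : (1 : ℕ) < n := by omega
  set v1 : Fin n := ⟨1, hv1lt⟩ with hv1def
  have hv1 : v1.val = 1 := rfl
  have hsub := noncrit_v1 hn ho v1 hv1
  have lift : ∀ a b : {u : Fin n // u ≠ v1},
      Relation.ReflTransGen (fun a b : {u : Fin n // u ≠ v1} => myAdj n a.val b.val) a b →
      Relation.ReflTransGen (myAdj n) a.val b.val :=
    fun a b h => Relation.ReflTransGen.lift Subtype.val (fun _ _ hr => hr) _ _ h
  intro x y
  rcases eq_or_ne x y with rfl | hxy
  · exact .refl
  rcases eq_or_ne x v1 with rfl | hx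
  · rcases eq_or_ne y v1 with rfl | hy
    · exact .refl
    · -- arc v1 → 2, then path
      have h2lt : (2 : ℕ) < n := by omega
      have harc : myAdj n v1 (⟨2, h2lt⟩ : Fin n) := by
        refine Or.inl ⟨Or.inr (by rw [hv1]),
          Fin.ne_of_val_ne (show (2:ℕ) ≠ v1.val by rw [hv1]; omega),
          Or.inr ⟨show (2:ℕ) % 2 = 0 by omega, show (2:ℕ) ≠ 0 by omega⟩⟩
      have hpath := hsub ⟨⟨2, h2lt⟩, Fin.ne_of_val_ne (show (2:ℕ) ≠ v1.val by rw [hv1]; omega)⟩ ⟨y, hy⟩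
      exact (Relation.ReflTransGen.single harc).trans (lift _ _ hpath)
  · rcases eq_or_ne y v1 with rfl | hy
    · -- path to 0, then arc 0 → v1
      have h0lt : (0 : ℕ) < n := by omega
      have harc : myAdj n (⟨0, h0lt⟩ : Fin n) v1 := by
        refine Or.inl ⟨Or.inl rfl, Fin.ne_of_val_ne (show v1.val ≠ (0:ℕ) by rw [hv1]; omega), Or.inl hv1⟩
      have hpath := hsub ⟨x, hx⟩ ⟨⟨0, h0lt⟩, Fin.ne_of_val_ne (show (0:ℕ) ≠ v1.val by rw [hv1]; omega)⟩
      exact (lift _ _ hpath).tail harc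
    · exact lift _ _ (hsub ⟨x, hx⟩ ⟨y, hy⟩)

/-- Any noncritical vertex equals vertex 1. -/
lemma uniq_noncrit (hn : 5 ≤ n) (ho : n % 2 = 1) (v1 : Fin n) (hv1 : v1.val = 1)
    (u : Fin n) (hu : Noncritical (myAdj n) u) : u = v1 := by
  by_contra hne
  have hu1 : u.val ≠ 1 := fun hc => hne (Fin.ext (by rw [hc, hv1]))
  have huln := u.isLt
  have hcases : u.val = 0 ∨ (u.val % 2 = 0 ∧ u.val ≠ 0) ∨ (u.val % 2 = 1 ∧ 3 ≤ u.val) := by omega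
  rcases hcases with h0 | ⟨hB, hB0⟩ | ⟨hC, hC3⟩
  · -- u = 0 : vertex n-1 is stranded
    have hqlt : n - 1 < n := by omega
    have hqne : ((⟨n - 1, hqlt⟩ : Fin n)) ≠ u := Fin.ne_of_val_ne (show n - 1 ≠ u.val by omega)
    have hyne : v1 ≠ u := Fin.ne_of_val_ne (by rw [hv1]; omega)
    have hr := hu ⟨⟨n - 1, hqlt⟩, hqne⟩ ⟨v1, hyne⟩
    have hstep : ∀ a b : {w : Fin n // w ≠ u}, a.val.val = n - 1 →
        myAdj n a.val b.val → b.val.val = n - 1 := by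
      intro a b ha hab
      rcases hab with ⟨hhub, -, -⟩ | ⟨-, hb⟩
      · rw [ha] at hhub; unfold hubP at hhub; omega
      · exfalso
        rw [ha] at hb
        have e : n - 1 + 1 = n := by omega
        rw [e, Nat.mod_self] at hb
        exact b.prop (Fin.ext (by rw [hb, h0]))
    have hP := closed_rtg hstep hr rfl
    have : v1.val = n - 1 := hP
    rw [hv1] at this; omega
  · -- u nonzero even : its successor s is unreachable
    have hslt : (u.val + 1) % n < n := Nat.mod_lt _ (by omega)
    have hsspec : (u.val + 1) % n = if u.val + 1 = n then 0 else u.val + 1 := succ_spec u.isLt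
    have hsne : ((⟨(u.val + 1) % n, hslt⟩ : Fin n)) ≠ u := by
      refine Fin.ne_of_val_ne ?_
      show (u.val + 1) % n ≠ u.val
      rw [hsspec]; split <;> omega
    have hxne : v1 ≠ u := Fin.ne_of_val_ne (by rw [hv1]; omega)
    have hr := hu ⟨v1, hxne⟩ ⟨⟨(u.val + 1) % n, hslt⟩, hsne⟩
    have hstep : ∀ a b : {w : Fin n // w ≠ u}, a.val.val ≠ (u.val + 1) % n →
        myAdj n a.val b.val → b.val.val ≠ (u.val + 1) % n := by
      intro a b _ hab hbs
      rcases hab with ⟨-, -, htgt⟩ | ⟨-, hb⟩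
      · rw [hbs, hsspec] at htgt; unfold tgtP at htgt
        split at htgt <;> omega
      · rw [hbs] at hb
        have haspec := succ_spec a.val.isLt
        have : a.val.val = u.val := by
          rw [haspec, hsspec] at hb
          split at hb <;> split at hb <;> omega
        exact a.prop (Fin.ext this)
    have hP := closed_rtg hstep hr (by
      show v1.val ≠ (u.val + 1) % n
      rw [hv1, hsspec]; split <;> omega)
    exact hP rfl
  · -- u odd ≥ 3 : vertex u-1 is stranded
    have hplt : u.val - 1 < n := by omega
    have hpne : ((⟨u.val - 1, hplt⟩ : Fin n)) ≠ u := Fin.ne_of_val_ne (show u.val - 1 ≠ u.val by omega)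
    have hyne : v1 ≠ u := Fin.ne_of_val_ne (by rw [hv1]; omega)
    have hr := hu ⟨⟨u.val - 1, hplt⟩, hpne⟩ ⟨v1, hyne⟩
    have hstep : ∀ a b : {w : Fin n // w ≠ u}, a.val.val = u.val - 1 →
        myAdj n a.val b.val → b.val.val = u.val - 1 := by
      intro a b ha hab
      rcases hab with ⟨hhub, -, -⟩ | ⟨-, hb⟩
      · rw [ha] at hhub; unfold hubP at hhub; omega
      · exfalso
        rw [ha] at hb
        have e : u.val - 1 + 1 = u.val := by omega
        rw [e, Nat.mod_eq_of_lt u.isLt] at hb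
        exact b.prop (Fin.ext hb)
    have hP := closed_rtg hstep hr rfl
    have : v1.val = u.val - 1 := hP
    rw [hv1] at this; omega

/-- Degree bound: every vertex has degree at least `(n+1)/2`. -/
lemma deg_bound (hn : 5 ≤ n) (ho : n % 2 = 1) (x : Fin n) :
    n + 1 ≤ 2 * degree (myAdj n) x := by
  set m := (n + 1) / 2 with hmdef
  have hm3 : 3 ≤ m := by omega
  have hmn : 2 * m = n + 1 := by omega
  suffices h : m ≤ degree (myAdj n) x by omega
  unfold degree
  have hxlt := x.isLt
  by_cases hx1 : x.val = 1
  · -- x = 1 : neighbors include all even vertices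
    have hinj : Function.Injective (fun i : Fin m => (⟨2 * i.val, by have := i.isLt; omega⟩ : Fin n)) := by
      intro i j hij
      simp only [Fin.mk.injEq] at hij
      exact Fin.ext (by omega)
    have hmem : ∀ y ∈ Finset.image (fun i : Fin m => (⟨2 * i.val, by have := i.isLt; omega⟩ : Fin n)) Finset.univ,
        y ∈ {y : Fin n | y ≠ x ∧ (myAdj n x y ∨ myAdj n y x)} := by
      intro y hy
      simp only [Finset.mem_image, Finset.mem_univ, true_and] at hy
      obtain ⟨i, rfl⟩ := hy
      refine ⟨Fin.ne_of_val_ne (show 2 * i.val ≠ x.val by omega), ?_⟩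
      rcases eq_or_ne i.val 0 with hi | hi
      · exact Or.inr (Or.inl ⟨Or.inl (show 2 * i.val = 0 by omega),
          Fin.ne_of_val_ne (show x.val ≠ 2 * i.val by omega), Or.inl hx1⟩)
      · exact Or.inl (Or.inl ⟨Or.inr (show x.val % 2 = 1 by omega),
          Fin.ne_of_val_ne (show 2 * i.val ≠ x.val by omega),
          Or.inr ⟨show (2 * i.val) % 2 = 0 by omega, show 2 * i.val ≠ 0 by omega⟩⟩)
    have hcard := card_le_ncard hmem (Set.toFinite _)
    rwa [Finset.card_image_of_injective _ hinj, Finset.card_univ, Fintype.card_fin] at hcard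
  · by_cases hxh : hubP x.val
    · -- x a hub with x ≠ 1 : neighbors include 1 and all nonzero even vertices
      have hxh' : x.val = 0 ∨ x.val % 2 = 1 := hxh
      have hinj : Function.Injective (fun i : Fin m =>
          (⟨if i.val = 0 then 1 else 2 * i.val, by have := i.isLt; split <;> omega⟩ : Fin n)) := by
        intro i j hij
        apply Fin.ext
        simp only [Fin.mk.injEq] at hij
        split_ifs at hij <;> omega
      have hmem : ∀ y ∈ Finset.image (fun i : Fin m =>
          (⟨if i.val = 0 then 1 else 2 * i.val, by have := i.isLt; split <;> omega⟩ : Fin n)) Finset.univ,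
          y ∈ {y : Fin n | y ≠ x ∧ (myAdj n x y ∨ myAdj n y x)} := by
        intro y hy
        simp only [Finset.mem_image, Finset.mem_univ, true_and] at hy
        obtain ⟨i, rfl⟩ := hy
        refine ⟨Fin.ne_of_val_ne (show (if i.val = 0 then 1 else 2 * i.val) ≠ x.val by
          split <;> omega), ?_⟩
        refine Or.inl (Or.inl ⟨hxh, Fin.ne_of_val_ne (show (if i.val = 0 then 1 else 2 * i.val) ≠ x.val by
          split <;> omega), ?_⟩)
        rcases eq_or_ne i.val 0 with hi | hi
        · exact Or.inl (show (if i.val = 0 then 1 else 2 * i.val) = 1 by rw [if_pos hi])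
        · exact Or.inr ⟨show (if i.val = 0 then 1 else 2 * i.val) % 2 = 0 by rw [if_neg hi]; omega,
            show (if i.val = 0 then 1 else 2 * i.val) ≠ 0 by rw [if_neg hi]; omega⟩
      have hcard := card_le_ncard hmem (Set.toFinite _)
      rwa [Finset.card_image_of_injective _ hinj, Finset.card_univ, Fintype.card_fin] at hcard
    · -- x a non-hub (nonzero even) : neighbors include all hubs
      have hx' : x.val % 2 = 0 ∧ x.val ≠ 0 := by unfold hubP at hxh; omega
      have hinj : Function.Injective (fun i : Fin m =>
          (⟨if i.val = m - 1 then 0 else 2 * i.val + 1, by have := i.isLt; split <;> omega⟩ : Fin n)) := by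
        intro i j hij
        apply Fin.ext
        simp only [Fin.mk.injEq] at hij
        split_ifs at hij <;> omega
      have hmem : ∀ y ∈ Finset.image (fun i : Fin m =>
          (⟨if i.val = m - 1 then 0 else 2 * i.val + 1, by have := i.isLt; split <;> omega⟩ : Fin n)) Finset.univ,
          y ∈ {y : Fin n | y ≠ x ∧ (myAdj n x y ∨ myAdj n y x)} := by
        intro y hy
        simp only [Finset.mem_image, Finset.mem_univ, true_and] at hy
        obtain ⟨i, rfl⟩ := hy
        refine ⟨Fin.ne_of_val_ne (show (if i.val = m - 1 then 0 else 2 * i.val + 1) ≠ x.val by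
          split <;> omega), ?_⟩
        refine Or.inr (Or.inl ⟨?_, Fin.ne_of_val_ne (show x.val ≠ (if i.val = m - 1 then 0 else 2 * i.val + 1) by
          split <;> omega), Or.inr ⟨hx'.1, hx'.2⟩⟩)
        show hubP (if i.val = m - 1 then 0 else 2 * i.val + 1)
        unfold hubP
        split <;> omega
      have hcard := card_le_ncard hmem (Set.toFinite _)
      rwa [Finset.card_image_of_injective _ hinj, Finset.card_univ, Fintype.card_fin] at hcard

/-- No loops. -/
lemma irrefl (hn : 5 ≤ n) (x : Fin n) : ¬ myAdj n x x := by
  rintro (⟨-, hne, -⟩ | ⟨-, hb⟩)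
  · exact hne rfl
  · have := x.isLt
    rw [succ_spec this] at hb
    split at hb <;> omega

end UNCaux

/-- For every odd `n ≥ 5` there is a strongly connected digraph on `n` vertices
with all degrees at least `(n + 1) / 2` (i.e. `2 * deg x ≥ n + 1`) having
exactly one noncritical vertex. -/
theorem exists_min_degree_digraph_with_unique_noncritical (n : ℕ) (hn : 5 ≤ n) (hodd : Odd n) :
    ∃ Adj : Fin n → Fin n → Prop,
      (∀ x, ¬ Adj x x) ∧
      IsStronglyConnected Adj ∧
      (∀ x, n + 1 ≤ 2 * degree Adj x) ∧
      (∃! v, Noncritical Adj v) := by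
  have ho : n % 2 = 1 := Nat.odd_iff.mp hodd
  refine ⟨UNCaux.myAdj n, fun x => UNCaux.irrefl hn x, UNCaux.strong_full hn ho,
    fun x => UNCaux.deg_bound hn ho x, ?_⟩
  exact ⟨⟨1, by omega⟩, UNCaux.noncrit_v1 hn ho _ rfl,
    fun u hu => UNCaux.uniq_noncrit hn ho _ rfl u hu⟩
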